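/- If a rewrite relation →_R (generated by closing a set of rules under substitution and context) is generated from rules whose left-hand sides are first-order algebraic terms, and →_R is locally confluent on the algebraic fragment, then the union →_R ∪ →_β is locally confluent on all lambda terms. -/

import Mathlib

/-- Lambda terms (de Bruijn) extended with function symbols applied to a list
of arguments. -/
inductive Tm (F : Type) : Type
  | var : ℕ → Tm F
  | lam : Tm F → Tm F
  | app : Tm F → Tm F → Tm F
  | sym : F → List (Tm F) → Tm F

namespace Tm

variable {F : Type}

/-- Renaming of de Bruijn variables. -/
def rename : (ℕ → ℕ) → Tm F → Tm F
  | ρ, .var n => .var (ρ n)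
  | ρ, .lam t => .lam (rename (fun n => Nat.casesOn n 0 (fun m => ρ m + 1)) t)
  | ρ, .app t u => .app (rename ρ t) (rename ρ u)
  | ρ, .sym f ts => .sym f (ts.attach.map fun x => rename ρ x.1)
termination_by ρ t => sizeOf t
decreasing_by
  all_goals simp_wf
  all_goals try omega
  all_goals (have := List.sizeOf_lt_of_mem x.2; omega)

/-- Lifting of a substitution under a binder. -/
def up (σ : ℕ → Tm F) : ℕ → Tm F :=
  fun n => Nat.casesOn n (.var 0) (fun m => rename Nat.succ (σ m))

/-- Capture-avoiding (de Bruijn) substitution. -/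
def subst : (ℕ → Tm F) → Tm F → Tm F
  | σ, .var n => σ n
  | σ, .lam t => .lam (subst (up σ) t)
  | σ, .app t u => .app (subst σ t) (subst σ u)
  | σ, .sym f ts => .sym f (ts.attach.map fun x => subst σ x.1)
termination_by σ t => sizeOf t
decreasing_by
  all_goals simp_wf
  all_goals try omega
  all_goals (have := List.sizeOf_lt_of_mem x.2; omega)

/-- Algebraic (first-order) terms: variables and symbol applications only. -/
inductive Alg : Tm F → Prop
  | var (n : ℕ) : Alg (.var n)
  | sym (f : F) (ts : List (Tm F)) : (∀ t ∈ ts, Alg t) → Alg (.sym f ts)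

/-- `FVar n t`: the de Bruijn variable `n` occurs free in `t`. -/
inductive FVar : ℕ → Tm F → Prop
  | var (n : ℕ) : FVar n (.var n)
  | lam {n : ℕ} {t : Tm F} : FVar (n + 1) t → FVar n (.lam t)
  | appL {n : ℕ} {t u : Tm F} : FVar n t → FVar n (.app t u)
  | appR {n : ℕ} {t u : Tm F} : FVar n u → FVar n (.app t u)
  | sym {n : ℕ} {f : F} {ts : List (Tm F)} {t : Tm F} :
      t ∈ ts → FVar n t → FVar n (.sym f ts)

/-- Closure of a relation by context. -/
inductive Ctx (base : Tm F → Tm F → Prop) : Tm F → Tm F → Prop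
  | base {t u : Tm F} : base t u → Ctx base t u
  | lam {t t' : Tm F} : Ctx base t t' → Ctx base (.lam t) (.lam t')
  | appL {t t' u : Tm F} : Ctx base t t' → Ctx base (.app t u) (.app t' u)
  | appR {t u u' : Tm F} : Ctx base u u' → Ctx base (.app t u) (.app t u')
  | sym {f : F} {l r : List (Tm F)} {t t' : Tm F} :
      Ctx base t t' → Ctx base (.sym f (l ++ t :: r)) (.sym f (l ++ t' :: r))

/-- Substitution replacing variable 0 by `b`. -/
def beta0 (b : Tm F) : ℕ → Tm F :=
  fun n => Nat.casesOn n b (fun m => .var m)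

/-- Root beta steps. -/
def BetaBase (t u : Tm F) : Prop :=
  ∃ a b : Tm F, t = .app (.lam a) b ∧ u = subst (beta0 b) a

/-- Root rewrite steps: instances of the rules by substitution. -/
def RBase (Rules : Set (Tm F × Tm F)) (t u : Tm F) : Prop :=
  ∃ p ∈ Rules, ∃ σ : ℕ → Tm F, t = subst σ p.1 ∧ u = subst σ p.2

end Tm

namespace Tm

variable {F : Type}

@[elab_as_elim] theorem my_ind {motive : Tm F → Prop}
    (hv : ∀ n, motive (.var n))
    (hl : ∀ t, motive t → motive (.lam t))
    (ha : ∀ t u, motive t → motive u → motive (.app t u))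
    (hs : ∀ f ts, (∀ t ∈ ts, motive t) → motive (.sym f ts)) :
    ∀ t, motive t
  | .var n => hv n
  | .lam t => hl t (my_ind hv hl ha hs t)
  | .app t u => ha t u (my_ind hv hl ha hs t) (my_ind hv hl ha hs u)
  | .sym f ts => hs f ts (fun t ht => my_ind hv hl ha hs t)
termination_by t => sizeOf t
decreasing_by
  all_goals simp_wf
  all_goals try omega
  all_goals (have := List.sizeOf_lt_of_mem ht; omega)

theorem attach_map_eq (ts : List (Tm F)) (g : Tm F → Tm F) :
    (ts.attach.map fun x => g x.1) = ts.map g := by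
  simp [List.attach_map_val]

@[simp] theorem rename_var (ρ : ℕ → ℕ) (n : ℕ) : rename ρ (.var n : Tm F) = .var (ρ n) := by
  rw [rename]

@[simp] theorem rename_lam (ρ : ℕ → ℕ) (t : Tm F) :
    rename ρ (.lam t) = .lam (rename (fun n => Nat.casesOn n 0 (fun m => ρ m + 1)) t) := by
  rw [rename]

@[simp] theorem rename_app (ρ : ℕ → ℕ) (t u : Tm F) :
    rename ρ (.app t u) = .app (rename ρ t) (rename ρ u) := by
  rw [rename]

@[simp] theorem rename_sym (ρ : ℕ → ℕ) (f : F) (ts : List (Tm F)) :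
    rename ρ (.sym f ts) = .sym f (ts.map (rename ρ)) := by
  rw [rename, attach_map_eq]

@[simp] theorem subst_var (σ : ℕ → Tm F) (n : ℕ) : subst σ (.var n) = σ n := by
  rw [subst]

@[simp] theorem subst_lam (σ : ℕ → Tm F) (t : Tm F) :
    subst σ (.lam t) = .lam (subst (up σ) t) := by
  rw [subst]

@[simp] theorem subst_app (σ : ℕ → Tm F) (t u : Tm F) :
    subst σ (.app t u) = .app (subst σ t) (subst σ u) := by
  rw [subst]

@[simp] theorem subst_sym (σ : ℕ → Tm F) (f : F) (ts : List (Tm F)) :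
    subst σ (.sym f ts) = .sym f (ts.map (subst σ)) := by
  rw [subst, attach_map_eq]

end Tm

namespace Tm
variable {F : Type}

/-- lifting of a renaming under a binder -/
def liftr (ρ : ℕ → ℕ) : ℕ → ℕ := fun n => Nat.casesOn n 0 (fun m => ρ m + 1)

theorem rename_def (ρ : ℕ → ℕ) (t : Tm F) :
    rename ρ (.lam t) = .lam (rename (liftr ρ) t) := rename_lam ρ t

theorem subst_ext {σ σ' : ℕ → Tm F} (h : ∀ n, σ n = σ' n) (t : Tm F) :
    subst σ t = subst σ' t := by rw [funext h]

theorem rename_ext {ρ ρ' : ℕ → ℕ} (h : ∀ n, ρ n = ρ' n) (t : Tm F) :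
    rename ρ t = rename ρ' t := by rw [funext h]

theorem rename_rename (ρ ρ' : ℕ → ℕ) (t : Tm F) :
    rename ρ (rename ρ' t) = rename (fun n => ρ (ρ' n)) t := by
  induction t using my_ind generalizing ρ ρ' with
  | hv n => simp
  | hl t ih =>
    simp only [rename_lam, lam.injEq]
    rw [ih]
    exact rename_ext (fun n => by cases n <;> rfl) t
  | ha t u iht ihu => simp [iht, ihu]
  | hs f ts ih => simp only [rename_sym, List.map_map, sym.injEq, true_and]
                  exact List.map_congr_left (fun a ha => ih a ha _ _)

theorem subst_rename (σ : ℕ → Tm F) (ρ : ℕ → ℕ) (t : Tm F) :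
    subst σ (rename ρ t) = subst (fun n => σ (ρ n)) t := by
  induction t using my_ind generalizing σ ρ with
  | hv n => simp
  | hl t ih =>
    simp only [rename_lam, subst_lam, lam.injEq]
    rw [ih]
    exact subst_ext (fun n => by cases n <;> rfl) t
  | ha t u iht ihu => simp [iht, ihu]
  | hs f ts ih => simp only [rename_sym, subst_sym, List.map_map, sym.injEq, true_and]
                  exact List.map_congr_left (fun a ha => ih a ha _ _)

theorem rename_subst (ρ : ℕ → ℕ) (σ : ℕ → Tm F) (t : Tm F) :
    rename ρ (subst σ t) = subst (fun n => rename ρ (σ n)) t := by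
  induction t using my_ind generalizing σ ρ with
  | hv n => simp
  | hl t ih =>
    simp only [subst_lam, rename_lam, lam.injEq]
    rw [ih]
    refine subst_ext (fun n => ?_) t
    cases n with
    | zero => simp [up, liftr]
    | succ m =>
        show rename _ (up σ (m+1)) = up (fun n => rename ρ (σ n)) (m+1)
        simp only [up]
        rw [rename_rename, rename_rename]
  | ha t u iht ihu => simp [iht, ihu]
  | hs f ts ih => simp only [subst_sym, rename_sym, List.map_map, sym.injEq, true_and]
                  exact List.map_congr_left (fun a ha => ih a ha _ _)

theorem subst_subst (σ θ : ℕ → Tm F) (t : Tm F) :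
    subst σ (subst θ t) = subst (fun n => subst σ (θ n)) t := by
  induction t using my_ind generalizing σ θ with
  | hv n => simp
  | hl t ih =>
    simp only [subst_lam, lam.injEq]
    rw [ih]
    refine subst_ext (fun n => ?_) t
    cases n with
    | zero => simp [up]
    | succ m =>
        show subst (up σ) (up θ (m+1)) = up (fun n => subst σ (θ n)) (m+1)
        simp only [up]
        rw [subst_rename, rename_subst]
        exact subst_ext (fun n => rfl) _
  | ha t u iht ihu => simp [iht, ihu]
  | hs f ts ih => simp only [subst_sym, List.map_map, sym.injEq, true_and]
                  exact List.map_congr_left (fun a ha => ih a ha _ _)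

@[simp] theorem subst_var_id (t : Tm F) : subst Tm.var t = t := by
  induction t using my_ind with
  | hv n => simp
  | hl t ih =>
    simp only [subst_lam, lam.injEq]
    rw [subst_ext (σ' := Tm.var) (fun n => by cases n <;> simp [up]) t, ih]
  | ha t u iht ihu => simp [iht, ihu]
  | hs f ts ih => simp only [subst_sym, sym.injEq, true_and]
                  conv_rhs => rw [← List.map_id ts]
                  exact List.map_congr_left (fun a ha => ih a ha)

theorem rename_eq_subst (ρ : ℕ → ℕ) (t : Tm F) :
    rename ρ t = subst (fun n => Tm.var (ρ n)) t := by
  induction t using my_ind generalizing ρ with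
  | hv n => simp
  | hl t ih =>
    simp only [rename_lam, subst_lam, lam.injEq]
    rw [ih]
    exact subst_ext (fun n => by cases n <;> simp [up, liftr]) t
  | ha t u iht ihu => simp [iht, ihu]
  | hs f ts ih => simp only [rename_sym, subst_sym, sym.injEq, true_and]
                  exact List.map_congr_left (fun a ha => ih a ha _)

end Tm

namespace Tm
variable {F : Type}

/-- reflexive subterm relation -/
inductive Sub : Tm F → Tm F → Prop
  | refl (t : Tm F) : Sub t t
  | lam {s t : Tm F} : Sub s t → Sub s (.lam t)
  | appL {s t u : Tm F} : Sub s t → Sub s (.app t u)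
  | appR {s t u : Tm F} : Sub s u → Sub s (.app t u)
  | sym {s t : Tm F} {f : F} {ts : List (Tm F)} : t ∈ ts → Sub s t → Sub s (.sym f ts)

theorem Sub.trans {a b c : Tm F} (h1 : Sub a b) (h2 : Sub b c) : Sub a c := by
  induction h2 with
  | refl => exact h1
  | lam _ ih => exact .lam ih
  | appL _ ih => exact .appL ih
  | appR _ ih => exact .appR ih
  | sym hm _ ih => exact .sym hm ih

theorem subst_congr_fvar {σ σ' : ℕ → Tm F} :
    ∀ t : Tm F, (∀ n, FVar n t → σ n = σ' n) → subst σ t = subst σ' t := by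
  intro t
  induction t using my_ind generalizing σ σ' with
  | hv n => intro h; simpa using h n (.var n)
  | hl t ih =>
    intro h
    simp only [subst_lam, lam.injEq]
    refine ih (fun n hn => ?_)
    cases n with
    | zero => rfl
    | succ m => show rename Nat.succ (σ m) = rename Nat.succ (σ' m)
                rw [h m (.lam hn)]
  | ha t u iht ihu =>
    intro h
    simp only [subst_app, app.injEq]
    exact ⟨iht (fun n hn => h n (.appL hn)), ihu (fun n hn => h n (.appR hn))⟩
  | hs f ts ih =>
    intro h
    simp only [subst_sym, sym.injEq, true_and]
    exact List.map_congr_left (fun a ha => ih a ha (fun n hn => h n (.sym ha hn)))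

theorem sub_subst_of_fvar {σ : ℕ → Tm F} {n : ℕ} {t : Tm F} (halg : Alg t)
    (h : FVar n t) : Sub (σ n) (subst σ t) := by
  induction halg with
  | var m => cases h; simpa using Sub.refl _
  | sym f ts _ ih =>
    cases h with
    | sym hm hf =>
      simp only [subst_sym]
      exact Sub.sym (List.mem_map_of_mem hm) (ih _ hm hf)

theorem alg_shape {l : Tm F} (halg : Alg l) (hnv : ∀ n, l ≠ .var n) :
    ∃ f ts, l = .sym f ts ∧ ∀ t ∈ ts, Alg t := by
  cases halg with
  | var n => exact absurd rfl (hnv n)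
  | sym f ts h => exact ⟨f, ts, rfl, h⟩

theorem ctx_subst {base : Tm F → Tm F → Prop}
    (hbase : ∀ (σ : ℕ → Tm F) t u, base t u → base (subst σ t) (subst σ u))
    {t u : Tm F} (h : Ctx base t u) (σ : ℕ → Tm F) :
    Ctx base (subst σ t) (subst σ u) := by
  induction h generalizing σ with
  | base hb => exact .base (hbase σ _ _ hb)
  | lam _ ih => simpa only [subst_lam] using Ctx.lam (ih (up σ))
  | appL _ ih => simpa only [subst_app] using Ctx.appL (ih σ)
  | appR _ ih => simpa only [subst_app] using Ctx.appR (ih σ)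
  | @sym f l r t t' _ ih =>
    simp only [subst_sym, List.map_append, List.map_cons]
    exact .sym (ih σ)

theorem rbase_subst {Rules : Set (Tm F × Tm F)} (σ : ℕ → Tm F) (t u : Tm F)
    (h : RBase Rules t u) : RBase Rules (subst σ t) (subst σ u) := by
  obtain ⟨p, hp, θ, ht, hu⟩ := h
  exact ⟨p, hp, fun n => subst σ (θ n), by rw [ht, subst_subst], by rw [hu, subst_subst]⟩

theorem betabase_subst (σ : ℕ → Tm F) (t u : Tm F)
    (h : BetaBase t u) : BetaBase (subst σ t) (subst σ u) := by
  obtain ⟨a, b, ht, hu⟩ := h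
  refine ⟨subst (up σ) a, subst σ b, by rw [ht]; simp, ?_⟩
  rw [hu, subst_subst, subst_subst]
  refine subst_ext (fun n => ?_) a
  cases n with
  | zero =>
    show subst σ b = subst (beta0 (subst σ b)) (Tm.var 0)
    rw [subst_var]; rfl
  | succ m =>
    show subst σ (Tm.var m) = subst (beta0 (subst σ b)) (rename Nat.succ (σ m))
    rw [subst_rename, subst_var]
    have h2 : subst (fun n => (subst σ b).beta0 n.succ) (σ m) = subst Tm.var (σ m) :=
      subst_ext (fun k => rfl) (σ m)
    rw [h2, subst_var_id]

end Tm

namespace Tm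
variable {F : Type}

open Relation

/-- union of root rewrite and root beta -/
def UB (Rules : Set (Tm F × Tm F)) : Tm F → Tm F → Prop :=
  fun a b => RBase Rules a b ∨ BetaBase a b

theorem ctx_mono {b1 b2 : Tm F → Tm F → Prop} (h : ∀ a b, b1 a b → b2 a b) :
    ∀ {t u}, Ctx b1 t u → Ctx b2 t u := by
  intro t u hc
  induction hc with
  | base hb => exact .base (h _ _ hb)
  | lam _ ih => exact .lam ih
  | appL _ ih => exact .appL ih
  | appR _ ih => exact .appR ih
  | sym _ ih => exact .sym ih

theorem ctx_union_elim {b1 b2 : Tm F → Tm F → Prop} {t u : Tm F}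
    (h : Ctx (fun a b => b1 a b ∨ b2 a b) t u) : Ctx b1 t u ∨ Ctx b2 t u := by
  induction h with
  | base hb => exact hb.imp .base .base
  | lam _ ih => exact ih.imp .lam .lam
  | appL _ ih => exact ih.imp .appL .appL
  | appR _ ih => exact ih.imp .appR .appR
  | sym _ ih => exact ih.imp .sym .sym

variable {Rules : Set (Tm F × Tm F)}

theorem u_subst {t u : Tm F} (h : Ctx (UB Rules) t u) (σ : ℕ → Tm F) :
    Ctx (UB Rules) (subst σ t) (subst σ u) :=
  ctx_subst (fun σ t u h => h.imp (rbase_subst σ t u) (betabase_subst σ t u)) h σ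

theorem u_rename {t u : Tm F} (h : Ctx (UB Rules) t u) (ρ : ℕ → ℕ) :
    Ctx (UB Rules) (rename ρ t) (rename ρ u) := by
  rw [rename_eq_subst, rename_eq_subst]; exact u_subst h _

theorem mlam {t t' : Tm F} (h : ReflTransGen (Ctx (UB Rules)) t t') :
    ReflTransGen (Ctx (UB Rules)) (.lam t) (.lam t') :=
  h.lift _ (fun _ _ h => Ctx.lam h)

theorem mrename (ρ : ℕ → ℕ) {t t' : Tm F} (h : ReflTransGen (Ctx (UB Rules)) t t') :
    ReflTransGen (Ctx (UB Rules)) (rename ρ t) (rename ρ t') :=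
  h.lift _ (fun _ _ h => u_rename h ρ)

theorem mapp {t t' u u' : Tm F} (h1 : ReflTransGen (Ctx (UB Rules)) t t')
    (h2 : ReflTransGen (Ctx (UB Rules)) u u') :
    ReflTransGen (Ctx (UB Rules)) (.app t u) (.app t' u') :=
  .trans (h1.lift (fun x => Tm.app x u) (fun _ _ h => Ctx.appL h))
         (h2.lift (fun x => Tm.app t' x) (fun _ _ h => Ctx.appR h))

theorem msym1 (f : F) (l r : List (Tm F)) {t t' : Tm F}
    (h : ReflTransGen (Ctx (UB Rules)) t t') :
    ReflTransGen (Ctx (UB Rules)) (.sym f (l ++ t :: r)) (.sym f (l ++ t' :: r)) :=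
  h.lift (fun x => Tm.sym f (l ++ x :: r)) (fun _ _ h => Ctx.sym h)

theorem msym_point (f : F) (g g' : Tm F → Tm F) :
    ∀ (ts : List (Tm F)), (∀ a ∈ ts, ReflTransGen (Ctx (UB Rules)) (g a) (g' a)) →
    ∀ pre : List (Tm F),
    ReflTransGen (Ctx (UB Rules)) (.sym f (pre ++ ts.map g)) (.sym f (pre ++ ts.map g')) := by
  intro ts
  induction ts with
  | nil => intro _ pre; simp only [List.map_nil]; exact .refl
  | cons a ts ih =>
    intro h pre
    simp only [List.map_cons]
    refine .trans (msym1 f pre (ts.map g) (h a (by simp))) ?_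
    have := ih (fun b hb => h b (by simp [hb])) (pre ++ [g' a])
    simpa using this

theorem msubst {σ σ' : ℕ → Tm F} (t : Tm F)
    (h : ∀ n, ReflTransGen (Ctx (UB Rules)) (σ n) (σ' n)) :
    ReflTransGen (Ctx (UB Rules)) (subst σ t) (subst σ' t) := by
  induction t using my_ind generalizing σ σ' with
  | hv n => simpa using h n
  | hl t ih =>
    simp only [subst_lam]
    refine mlam (ih (fun n => ?_))
    cases n with
    | zero => exact .refl
    | succ m => exact mrename Nat.succ (h m)
  | ha t u iht ihu => simp only [subst_app]; exact mapp (iht h) (ihu h)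
  | hs f ts ih =>
    simp only [subst_sym]
    simpa using msym_point f (subst σ) (subst σ') ts (fun a ha => ih a ha h) []

theorem mbeta0 {a b b' : Tm F} (h : ReflTransGen (Ctx (UB Rules)) b b') :
    ReflTransGen (Ctx (UB Rules)) (subst (beta0 b) a) (subst (beta0 b') a) :=
  msubst a (fun n => by cases n with
    | zero => exact h
    | succ m => exact .refl)

end Tm

namespace Tm
variable {F : Type}

theorem attach_map_eq' {β : Type*} (ts : List (Tm F)) (g : Tm F → β) :
    (ts.attach.map fun x => g x.1) = ts.map g := by
  simp [List.attach_map_val]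

/-- head is a lambda or an application -/
def nonAlgHead (t : Tm F) : Prop := (∃ a, t = .lam a) ∨ (∃ a b, t = .app a b)

/-- algebraic cap: replace lam/app-headed subterms by encoded variables,
double original variables. -/
def capAux (enc : Tm F → ℕ) : Tm F → Tm F
  | .var n => .var (2*n)
  | .lam t => .var (enc (.lam t))
  | .app t u => .var (enc (.app t u))
  | .sym f ts => .sym f (ts.attach.map fun x => capAux enc x.1)
termination_by t => sizeOf t
decreasing_by
  all_goals simp_wf
  all_goals (have := List.sizeOf_lt_of_mem x.2; omega)

@[simp] theorem capAux_var (enc : Tm F → ℕ) (n : ℕ) :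
    capAux enc (.var n : Tm F) = .var (2*n) := by rw [capAux]
@[simp] theorem capAux_lam (enc : Tm F → ℕ) (t : Tm F) :
    capAux enc (.lam t) = .var (enc (.lam t)) := by rw [capAux]
@[simp] theorem capAux_app (enc : Tm F → ℕ) (t u : Tm F) :
    capAux enc (.app t u) = .var (enc (.app t u)) := by rw [capAux]
@[simp] theorem capAux_sym (enc : Tm F → ℕ) (f : F) (ts : List (Tm F)) :
    capAux enc (.sym f ts) = .sym f (ts.map (capAux enc)) := by
  rw [capAux, attach_map_eq']

theorem cap_alg (enc : Tm F → ℕ) (t : Tm F) : Alg (capAux enc t) := by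
  induction t using my_ind with
  | hv n => simp; exact .var _
  | hl t _ => simp; exact .var _
  | ha t u _ _ => simp; exact .var _
  | hs f ts ih =>
    simp only [capAux_sym]
    refine .sym _ _ (fun s hs => ?_)
    obtain ⟨a, ha, rfl⟩ := List.mem_map.mp hs
    exact ih a ha

theorem cap_subst_alg (enc : Tm F → ℕ) {l : Tm F} (halg : Alg l) (σ : ℕ → Tm F) :
    capAux enc (subst σ l) = subst (fun n => capAux enc (σ n)) l := by
  induction halg with
  | var n => simp
  | sym f ts _ ih =>
    simp only [subst_sym, capAux_sym, List.map_map]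
    exact congrArg _ (List.map_congr_left (fun a ha => ih a ha))

theorem decode_cap {enc : Tm F → ℕ} {τ : ℕ → Tm F}
    (h0 : ∀ n, τ (2*n) = Tm.var n) :
    ∀ t : Tm F, (∀ s, Sub s t → nonAlgHead s → τ (enc s) = s) →
    subst τ (capAux enc t) = t := by
  intro t
  induction t using my_ind with
  | hv n => intro _; simp [h0]
  | hl t _ => intro hS; simp [hS _ (.refl _) (Or.inl ⟨t, rfl⟩)]
  | ha t u _ _ => intro hS; simp [hS _ (.refl _) (Or.inr ⟨t, u, rfl⟩)]
  | hs f ts ih =>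
    intro hS
    simp only [capAux_sym, subst_sym, List.map_map, sym.injEq, true_and]
    conv_rhs => rw [← List.map_id ts]
    exact List.map_congr_left (fun a ha =>
      ih a ha (fun s hs hn => hS s (Sub.trans hs (.sym ha (.refl _))) hn))

/-- list of all subterms -/
def subsList : Tm F → List (Tm F)
  | .var n => [.var n]
  | .lam t => .lam t :: subsList t
  | .app t u => .app t u :: (subsList t ++ subsList u)
  | .sym f ts => .sym f ts :: (ts.attach.map fun x => subsList x.1).flatten
termination_by t => sizeOf t
decreasing_by
  all_goals simp_wf
  all_goals try omega
  all_goals (have := List.sizeOf_lt_of_mem x.2; omega)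

theorem sub_mem_subsList {s t : Tm F} (h : Sub s t) : s ∈ subsList t := by
  induction h with
  | refl => cases s <;> rw [subsList] <;> exact List.mem_cons_self
  | lam _ ih => rw [subsList]; exact List.mem_cons_of_mem _ ih
  | appL _ ih => rw [subsList]; exact List.mem_cons_of_mem _ (List.mem_append_left _ ih)
  | appR _ ih => rw [subsList]; exact List.mem_cons_of_mem _ (List.mem_append_right _ ih)
  | sym hm _ ih =>
    rw [subsList]
    refine List.mem_cons_of_mem _ (List.mem_flatten.mpr ⟨_, ?_, ih⟩)
    exact List.mem_map.mpr ⟨⟨_, hm⟩, List.mem_attach _ _, rfl⟩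

theorem exists_enc_tau (T : List (Tm F)) :
    ∃ (enc : Tm F → ℕ) (τ : ℕ → Tm F),
      (∀ n, τ (2*n) = Tm.var n) ∧ (∀ s ∈ T, τ (enc s) = s) := by
  classical
  refine ⟨fun s => 2 * T.idxOf s + 1,
    fun k => if k % 2 = 0 then .var (k/2) else T.getD ((k-1)/2) (.var 0), fun n => ?_, fun s hs => ?_⟩
  · show (if (2*n) % 2 = 0 then (Tm.var ((2*n)/2) : Tm F) else T.getD ((2*n-1)/2) (.var 0)) = .var n
    have h : (2*n) % 2 = 0 := by omega
    rw [if_pos h]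
    congr 1
    omega
  · have hlt : T.idxOf s < T.length := List.idxOf_lt_length_iff.mpr hs
    have h1 : (2 * T.idxOf s + 1) % 2 ≠ 0 := by omega
    have h2 : (2 * T.idxOf s + 1 - 1) / 2 = T.idxOf s := by omega
    show (if (2 * T.idxOf s + 1) % 2 = 0 then (Tm.var ((2 * T.idxOf s + 1)/2) : Tm F)
          else T.getD ((2 * T.idxOf s + 1 - 1)/2) (.var 0)) = s
    rw [if_neg h1, h2, List.getD_eq_getElem (hn := hlt), List.getElem_idxOf hlt]

end Tm

namespace Tm
variable {F : Type}
open Relation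

theorem msym_point2 (Rules : Set (Tm F × Tm F)) (f : F) (g g' : Tm F → Tm F) :
    ∀ (ts : List (Tm F)), (∀ a ∈ ts, ReflTransGen (Ctx (UB Rules)) (g a) (g' a)) →
    ∀ pre suf : List (Tm F),
    ReflTransGen (Ctx (UB Rules)) (.sym f (pre ++ ts.map g ++ suf))
      (.sym f (pre ++ ts.map g' ++ suf)) := by
  intro ts
  induction ts with
  | nil => intro _ pre suf; exact .refl
  | cons a ts ih =>
    intro h pre suf
    simp only [List.map_cons]
    have s1 : ReflTransGen (Ctx (UB Rules)) (.sym f (pre ++ (g a :: ts.map g) ++ suf))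
        (.sym f (pre ++ (g' a :: ts.map g) ++ suf)) := by
      have := msym1 (Rules := Rules) f pre (ts.map g ++ suf) (h a (by simp))
      simpa using this
    refine .trans s1 ?_
    have := ih (fun b hb => h b (by simp [hb])) (pre ++ [g' a]) suf
    simpa using this

theorem map_eq_append_cons {α β : Type*} {g : α → β} :
    ∀ {L : List β} {ts : List α} {s : β} {R : List β},
    L ++ s :: R = ts.map g →
    ∃ ts₁ a ts₂, ts = ts₁ ++ a :: ts₂ ∧ L = ts₁.map g ∧ s = g a ∧ R = ts₂.map g := by
  intro L
  induction L with
  | nil =>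
    intro ts s R h
    cases ts with
    | nil => simp at h
    | cons b ts' =>
      simp only [List.map_cons, List.nil_append] at h
      obtain ⟨h1, h2⟩ := List.cons_eq_cons.mp h
      exact ⟨[], b, ts', rfl, rfl, h1, h2⟩
  | cons x L ih =>
    intro ts s R h
    cases ts with
    | nil => simp at h
    | cons b ts' =>
      simp only [List.map_cons, List.cons_append] at h
      obtain ⟨h1, h2⟩ := List.cons_eq_cons.mp h
      obtain ⟨ts₁, a, ts₂, rfl, hL, hs, hR⟩ := ih h2
      exact ⟨b :: ts₁, a, ts₂, rfl, by simp [hL, h1], hs, hR⟩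

theorem assemble (Rules : Set (Tm F × Tm F)) (f : F) (σ σ' : ℕ → Tm F)
    (ts₁ ts₂ : List (Tm F)) (a v' : Tm F)
    (hp : ∀ m, ReflTransGen (Ctx (UB Rules)) (σ m) (σ' m))
    (hmid : ReflTransGen (Ctx (UB Rules)) v' (subst σ' a)) :
    ReflTransGen (Ctx (UB Rules)) (.sym f (ts₁.map (subst σ) ++ v' :: ts₂.map (subst σ)))
      (.sym f ((ts₁ ++ a :: ts₂).map (subst σ'))) := by
  have s1 := msym1 (Rules := Rules) f (ts₁.map (subst σ)) (ts₂.map (subst σ)) hmid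
  refine .trans s1 ?_
  have s2 := msym_point2 Rules f (subst σ) (subst σ') ts₁
    (fun b _ => msubst b hp) [] (subst σ' a :: ts₂.map (subst σ))
  have s3 := msym_point2 Rules f (subst σ) (subst σ') ts₂
    (fun b _ => msubst b hp) (ts₁.map (subst σ') ++ [subst σ' a]) []
  simp only [List.nil_append, List.append_nil] at s2 s3
  refine .trans (by simpa using s2) ?_
  simpa [List.append_assoc] using s3

theorem decomp_var {Rules : Set (Tm F × Tm F)} {t v : Tm F}
    (h : Ctx (UB Rules) t v) (σ : ℕ → Tm F) (n : ℕ) (heq : t = subst σ (.var n)) :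
    ∃ σ', (∀ m, ReflTransGen (Ctx (UB Rules)) (σ m) (σ' m)) ∧
      ReflTransGen (Ctx (UB Rules)) v (subst σ' (.var n)) := by
  classical
  rw [subst_var] at heq
  refine ⟨fun m => if m = n then v else σ m, fun m => ?_, ?_⟩
  · show ReflTransGen _ (σ m) (if m = n then v else σ m)
    by_cases hm : m = n
    · subst hm; rw [if_pos rfl, ← heq]; exact .single h
    · rw [if_neg hm]
  · rw [subst_var]
    show ReflTransGen _ v (if n = n then v else σ n)
    rw [if_pos rfl]

theorem beta_decomp {Rules : Set (Tm F × Tm F)} :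
    ∀ {t v : Tm F}, Ctx BetaBase t v → ∀ (σ : ℕ → Tm F) (l : Tm F), Alg l → t = subst σ l →
    ∃ σ', (∀ m, ReflTransGen (Ctx (UB Rules)) (σ m) (σ' m)) ∧
      ReflTransGen (Ctx (UB Rules)) v (subst σ' l) := by
  intro t v h
  induction h with
  | @base t v hb =>
    intro σ l halg heq
    cases halg with
    | var n => exact decomp_var (.base (Or.inr hb)) σ n heq
    | sym f ts _ =>
      obtain ⟨a, b, hab, -⟩ := hb
      rw [subst_sym] at heq
      exact absurd (heq ▸ hab) (by simp)
  | @lam t t' hs _ =>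
    intro σ l halg heq
    cases halg with
    | var n => exact decomp_var (.lam (ctx_mono (fun _ _ h => Or.inr h) hs)) σ n heq
    | sym f ts _ => rw [subst_sym] at heq; exact absurd heq (by simp)
  | @appL t t' u hs _ =>
    intro σ l halg heq
    cases halg with
    | var n => exact decomp_var (.appL (ctx_mono (fun _ _ h => Or.inr h) hs)) σ n heq
    | sym f ts _ => rw [subst_sym] at heq; exact absurd heq (by simp)
  | @appR t u u' hs _ =>
    intro σ l halg heq
    cases halg with
    | var n => exact decomp_var (.appR (ctx_mono (fun _ _ h => Or.inr h) hs)) σ n heq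
    | sym f ts _ => rw [subst_sym] at heq; exact absurd heq (by simp)
  | @sym f L R s s' hs ih =>
    intro σ l halg heq
    cases halg with
    | var n => exact decomp_var (.sym (ctx_mono (fun _ _ h => Or.inr h) hs)) σ n heq
    | sym g ts hts =>
      rw [subst_sym] at heq
      injection heq with hf hl
      subst hf
      obtain ⟨ts₁, a, ts₂, rfl, hL, hsa, hR⟩ := map_eq_append_cons hl
      obtain ⟨σ', hp, hmid⟩ := ih σ a (hts a (by simp)) hsa
      refine ⟨σ', hp, ?_⟩
      rw [subst_sym]
      subst hL hR
      exact assemble Rules f σ σ' ts₁ ts₂ a s' hp hmid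

theorem rstep_decomp {Rules : Set (Tm F × Tm F)}
    (hrules : ∀ p ∈ Rules, Alg p.1 ∧ (∀ n, p.1 ≠ Tm.var n) ∧
      (∀ n, FVar n p.2 → FVar n p.1))
    {enc : Tm F → ℕ} {τ : ℕ → Tm F} (h0 : ∀ n, τ (2*n) = Tm.var n) :
    ∀ {t v : Tm F}, Ctx (RBase Rules) t v →
    (∀ s, Sub s t → nonAlgHead s → τ (enc s) = s) →
    ∀ (σ : ℕ → Tm F) (l : Tm F), Alg l → t = subst σ l →
    (∃ σ', (∀ m, ReflTransGen (Ctx (UB Rules)) (σ m) (σ' m)) ∧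
      ReflTransGen (Ctx (UB Rules)) v (subst σ' l)) ∨
    (∃ v₀, Ctx (RBase Rules) (capAux enc t) v₀ ∧ subst τ v₀ = v) := by
  intro t v h
  induction h with
  | @base t v hb =>
    intro hS σ l halg heq
    right
    obtain ⟨p, hp, θ, ht, hv⟩ := hb
    obtain ⟨halg1, hnv1, hfv1⟩ := hrules p hp
    refine ⟨subst (fun n => capAux enc (θ n)) p.2, ?_, ?_⟩
    · refine .base ⟨p, hp, fun n => capAux enc (θ n), ?_, rfl⟩
      rw [ht, cap_subst_alg enc halg1]
    · rw [subst_subst, hv]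
      refine subst_congr_fvar p.2 (fun n hn => ?_)
      refine decode_cap h0 (θ n) (fun s hsub hnah => ?_)
      refine hS s (Sub.trans hsub ?_) hnah
      rw [ht]
      exact sub_subst_of_fvar halg1 (hfv1 n hn)
  | @lam t t' hs _ =>
    intro hS σ l halg heq
    cases halg with
    | var n => exact Or.inl (decomp_var (.lam (ctx_mono (fun _ _ h => Or.inl h) hs)) σ n heq)
    | sym f ts _ => rw [subst_sym] at heq; exact absurd heq (by simp)
  | @appL t t' u hs _ =>
    intro hS σ l halg heq
    cases halg with
    | var n => exact Or.inl (decomp_var (.appL (ctx_mono (fun _ _ h => Or.inl h) hs)) σ n heq)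
    | sym f ts _ => rw [subst_sym] at heq; exact absurd heq (by simp)
  | @appR t u u' hs _ =>
    intro hS σ l halg heq
    cases halg with
    | var n => exact Or.inl (decomp_var (.appR (ctx_mono (fun _ _ h => Or.inl h) hs)) σ n heq)
    | sym f ts _ => rw [subst_sym] at heq; exact absurd heq (by simp)
  | @sym f L R s s' hs ih =>
    intro hS σ l halg heq
    cases halg with
    | var n => exact Or.inl (decomp_var (.sym (ctx_mono (fun _ _ h => Or.inl h) hs)) σ n heq)
    | sym g ts hts =>
      rw [subst_sym] at heq
      injection heq with hf hl
      subst hf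
      obtain ⟨ts₁, a, ts₂, rfl, hL, hsa, hR⟩ := map_eq_append_cons hl
      have hS' : ∀ x, Sub x s → nonAlgHead x → τ (enc x) = x := fun x hx hn =>
        hS x (Sub.trans hx (.sym (by simp) (.refl _))) hn
      rcases ih hS' σ a (hts a (by simp)) hsa with ⟨σ', hp, hmid⟩ | ⟨v₀', hstep, hdec⟩
      · refine Or.inl ⟨σ', hp, ?_⟩
        rw [subst_sym]
        subst hL hR
        exact assemble Rules f σ σ' ts₁ ts₂ a s' hp hmid
      · right
        refine ⟨.sym f (L.map (capAux enc) ++ v₀' :: R.map (capAux enc)), ?_, ?_⟩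
        · have : capAux enc (Tm.sym f (L ++ s :: R))
              = .sym f (L.map (capAux enc) ++ capAux enc s :: R.map (capAux enc)) := by
            simp [capAux_sym]
          rw [this]
          exact .sym hstep
        · have hdecL : ∀ x ∈ L, subst τ (capAux enc x) = x := fun x hx =>
            decode_cap h0 x (fun s2 hs2 hn2 => hS s2
              (Sub.trans hs2 (.sym (by simp [hx]) (.refl _))) hn2)
          have hdecR : ∀ x ∈ R, subst τ (capAux enc x) = x := fun x hx =>
            decode_cap h0 x (fun s2 hs2 hn2 => hS s2
              (Sub.trans hs2 (.sym (by simp [hx]) (.refl _))) hn2)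
          simp only [subst_sym, List.map_append, List.map_cons, List.map_map]
          have e1 : L.map (subst τ ∘ capAux enc) = L := by
            conv_rhs => rw [← List.map_id L]
            exact List.map_congr_left (fun x hx => hdecL x hx)
          have e2 : R.map (subst τ ∘ capAux enc) = R := by
            conv_rhs => rw [← List.map_id R]
            exact List.map_congr_left (fun x hx => hdecR x hx)
          rw [e1, e2, hdec]

end Tm

namespace Tm
variable {F : Type}
open Relation

def Joinable (Rules : Set (Tm F × Tm F)) (u v : Tm F) : Prop :=
  ∃ w, ReflTransGen (Ctx (UB Rules)) u w ∧ ReflTransGen (Ctx (UB Rules)) v w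

theorem Joinable.symm {Rules : Set (Tm F × Tm F)} {u v : Tm F}
    (h : Joinable Rules u v) : Joinable Rules v u := by
  obtain ⟨w, h1, h2⟩ := h; exact ⟨w, h2, h1⟩

theorem u_elim {Rules : Set (Tm F × Tm F)} {t v : Tm F} (h : Ctx (UB Rules) t v) :
    Ctx (RBase Rules) t v ∨ Ctx BetaBase t v :=
  ctx_union_elim h

theorem mRsubst {Rules : Set (Tm F × Tm F)} (τ : ℕ → Tm F) {a b : Tm F}
    (h : ReflTransGen (Ctx (RBase Rules)) a b) :
    ReflTransGen (Ctx (UB Rules)) (subst τ a) (subst τ b) :=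
  h.lift (subst τ) (fun _ _ hh =>
    ctx_mono (fun _ _ => Or.inl) (ctx_subst (rbase_subst (Rules := Rules)) hh τ))

section Master

variable {Rules : Set (Tm F × Tm F)}
  (hrules : ∀ p ∈ Rules, Alg p.1 ∧ (∀ n, p.1 ≠ Tm.var n) ∧
      (∀ n, FVar n p.2 → FVar n p.1))
  (hlcR : ∀ t u v : Tm F, Alg t → Ctx (RBase Rules) t u → Ctx (RBase Rules) t v →
      ∃ w, Relation.ReflTransGen (Ctx (RBase Rules)) u w ∧
           Relation.ReflTransGen (Ctx (RBase Rules)) v w)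

include hrules hlcR in
theorem peak_rbase {t u v : Tm F} (h1 : RBase Rules t u) (h2 : Ctx (UB Rules) t v) :
    Joinable Rules u v := by
  obtain ⟨p, hp, σ, ht, hu⟩ := h1
  obtain ⟨halg1, hnv1, hfv1⟩ := hrules p hp
  rcases u_elim h2 with hR | hβ
  · -- second step is a rewrite step
    obtain ⟨enc, τ, h0, hT⟩ := exists_enc_tau (subsList t)
    have hS : ∀ s, Sub s t → nonAlgHead s → τ (enc s) = s :=
      fun s hsub _ => hT s (sub_mem_subsList hsub)
    rcases rstep_decomp hrules h0 hR hS σ p.1 halg1 ht with ⟨σ', hpnt, hv⟩ | ⟨v₀, hstep, hdec⟩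
    · refine ⟨subst σ' p.2, ?_, ?_⟩
      · rw [hu]; exact msubst _ hpnt
      · exact hv.trans (.single (.base (Or.inl ⟨p, hp, σ', rfl, rfl⟩)))
    · have hcap : capAux enc t = subst (fun n => capAux enc (σ n)) p.1 := by
        rw [ht, cap_subst_alg enc halg1]
      have step1 : Ctx (RBase Rules) (capAux enc t) (subst (fun n => capAux enc (σ n)) p.2) :=
        .base ⟨p, hp, fun n => capAux enc (σ n), hcap, rfl⟩
      obtain ⟨w, hw1, hw2⟩ := hlcR (capAux enc t) _ v₀ (cap_alg enc t) step1 hstep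
      have hdecu : subst τ (subst (fun n => capAux enc (σ n)) p.2) = u := by
        rw [subst_subst, hu]
        refine subst_congr_fvar p.2 (fun n hn => ?_)
        refine decode_cap h0 (σ n) (fun s hsub hnah => ?_)
        refine hS s (Sub.trans hsub ?_) hnah
        rw [ht]
        exact sub_subst_of_fvar halg1 (hfv1 n hn)
      refine ⟨subst τ w, ?_, ?_⟩
      · rw [← hdecu]; exact mRsubst τ hw1
      · rw [← hdec]; exact mRsubst τ hw2
  · -- second step is a beta step
    obtain ⟨σ', hpnt, hv⟩ := beta_decomp hβ σ p.1 halg1 ht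
    refine ⟨subst σ' p.2, ?_, ?_⟩
    · rw [hu]; exact msubst _ hpnt
    · exact hv.trans (.single (.base (Or.inl ⟨p, hp, σ', rfl, rfl⟩)))

include hrules in
theorem peak_bbase {t u v : Tm F} (h1 : BetaBase t u) (h2 : Ctx (UB Rules) t v) :
    Joinable Rules u v := by
  obtain ⟨a, b, ht, hu⟩ := h1
  subst ht
  cases h2 with
  | base hb =>
    rcases hb with hR | hβ
    · obtain ⟨p, hp, θ, ht', -⟩ := hR
      obtain ⟨halg1, hnv1, -⟩ := hrules p hp
      obtain ⟨f, ts, hfts, -⟩ := alg_shape halg1 hnv1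
      rw [hfts, subst_sym] at ht'
      exact absurd ht' (by simp)
    · obtain ⟨a', b', ht', hv⟩ := hβ
      injection ht' with h1 h2
      injection h1 with h1
      subst h1 h2
      exact ⟨u, .refl, by rw [hu, hv]⟩
  | appL h' =>
    cases h' with
    | base hb =>
      rcases hb with hR | hβ
      · obtain ⟨p, hp, θ, ht', -⟩ := hR
        obtain ⟨halg1, hnv1, -⟩ := hrules p hp
        obtain ⟨f, ts, hfts, -⟩ := alg_shape halg1 hnv1
        rw [hfts, subst_sym] at ht'
        exact absurd ht' (by simp)
      · obtain ⟨a', b', ht', -⟩ := hβ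
        exact absurd ht' (by simp)
    | lam h'' =>
      rename_i a'
      refine ⟨subst (beta0 b) a', ?_, ?_⟩
      · rw [hu]; exact .single (u_subst h'' (beta0 b))
      · exact .single (.base (Or.inr ⟨a', b, rfl, rfl⟩))
  | appR h' =>
    rename_i b'
    refine ⟨subst (beta0 b') a, ?_, ?_⟩
    · rw [hu]; exact mbeta0 (.single h')
    · exact .single (.base (Or.inr ⟨a, b', rfl, rfl⟩))

end Master

end Tm

namespace Tm
variable {F : Type}
open Relation

theorem append_cons_dichotomy {α : Type*} :
    ∀ {l₁ : List α} {a : α} {r₁ l₂ : List α} {b : α} {r₂ : List α},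
    l₁ ++ a :: r₁ = l₂ ++ b :: r₂ →
    (l₁ = l₂ ∧ a = b ∧ r₁ = r₂) ∨
    (∃ mid, l₂ = l₁ ++ a :: mid ∧ r₁ = mid ++ b :: r₂) ∨
    (∃ mid, l₁ = l₂ ++ b :: mid ∧ r₂ = mid ++ a :: r₁) := by
  intro l₁
  induction l₁ with
  | nil =>
    intro a r₁ l₂ b r₂ h
    cases l₂ with
    | nil =>
      obtain ⟨h1, h2⟩ := List.cons_eq_cons.mp h
      exact Or.inl ⟨rfl, h1, h2⟩
    | cons c l₂' =>
      simp only [List.nil_append, List.cons_append] at h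
      obtain ⟨h1, h2⟩ := List.cons_eq_cons.mp h
      subst h1 h2
      exact Or.inr (Or.inl ⟨l₂', rfl, rfl⟩)
  | cons c l₁' ih =>
    intro a r₁ l₂ b r₂ h
    cases l₂ with
    | nil =>
      simp only [List.cons_append, List.nil_append] at h
      obtain ⟨h1, h2⟩ := List.cons_eq_cons.mp h
      subst h1 h2
      exact Or.inr (Or.inr ⟨l₁', rfl, rfl⟩)
    | cons d l₂' =>
      simp only [List.cons_append] at h
      obtain ⟨h1, h2⟩ := List.cons_eq_cons.mp h
      subst h1
      rcases ih h2 with ⟨rfl, rfl, rfl⟩ | ⟨mid, rfl, rfl⟩ | ⟨mid, rfl, rfl⟩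
      · exact Or.inl ⟨rfl, rfl, rfl⟩
      · exact Or.inr (Or.inl ⟨mid, rfl, rfl⟩)
      · exact Or.inr (Or.inr ⟨mid, rfl, rfl⟩)

theorem sizeOf_lt_of_mem_tm {s : Tm F} {f : F} {ts : List (Tm F)} (h : s ∈ ts) :
    sizeOf s < sizeOf (Tm.sym f ts) := by
  have := List.sizeOf_lt_of_mem h
  simp only [Tm.sym.sizeOf_spec]
  omega

section Master2

variable {Rules : Set (Tm F × Tm F)}
  (hrules : ∀ p ∈ Rules, Alg p.1 ∧ (∀ n, p.1 ≠ Tm.var n) ∧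
      (∀ n, FVar n p.2 → FVar n p.1))
  (hlcR : ∀ t u v : Tm F, Alg t → Ctx (RBase Rules) t u → Ctx (RBase Rules) t v →
      ∃ w, Relation.ReflTransGen (Ctx (RBase Rules)) u w ∧
           Relation.ReflTransGen (Ctx (RBase Rules)) v w)

include hrules hlcR in
theorem peak_base {t u v : Tm F} (h1 : UB Rules t u) (h2 : Ctx (UB Rules) t v) :
    Joinable Rules u v := by
  rcases h1 with hR | hβ
  · exact peak_rbase hrules hlcR hR h2
  · exact peak_bbase hrules hβ h2

include hrules hlcR in
theorem main : ∀ N (t u v : Tm F), sizeOf t ≤ N →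
    Ctx (UB Rules) t u → Ctx (UB Rules) t v → Joinable Rules u v := by
  intro N
  induction N using Nat.strong_induction_on with
  | _ N ih =>
  intro t u v hsz h1 h2
  cases h1 with
  | base hb => exact peak_base hrules hlcR hb h2
  | @lam t₀ t₀' h1' =>
    cases h2 with
    | base hb => exact (peak_base hrules hlcR hb (.lam h1')).symm
    | lam h2' =>
      have hlt : sizeOf t₀ < N := by
        have : sizeOf t₀ < sizeOf (Tm.lam t₀) := by simp only [Tm.lam.sizeOf_spec]; omega
        omega
      obtain ⟨w, j1, j2⟩ := ih (sizeOf t₀) hlt t₀ _ _ le_rfl h1' h2'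
      exact ⟨.lam w, mlam j1, mlam j2⟩
  | @appL t₁ t₁' t₂ h1' =>
    cases h2 with
    | base hb => exact (peak_base hrules hlcR hb (.appL h1')).symm
    | appL h2' =>
      have hlt : sizeOf t₁ < N := by
        have : sizeOf t₁ < sizeOf (Tm.app t₁ t₂) := by simp only [Tm.app.sizeOf_spec]; omega
        omega
      obtain ⟨w, j1, j2⟩ := ih (sizeOf t₁) hlt t₁ _ _ le_rfl h1' h2'
      exact ⟨.app w t₂, mapp j1 .refl, mapp j2 .refl⟩
    | @appR _ _ t₂' h2' =>
      exact ⟨.app t₁' t₂', .single (.appR h2'), .single (.appL h1')⟩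
  | @appR t₁ t₂ t₂' h1' =>
    cases h2 with
    | base hb => exact (peak_base hrules hlcR hb (.appR h1')).symm
    | appR h2' =>
      have hlt : sizeOf t₂ < N := by
        have : sizeOf t₂ < sizeOf (Tm.app t₁ t₂) := by simp only [Tm.app.sizeOf_spec]; omega
        omega
      obtain ⟨w, j1, j2⟩ := ih (sizeOf t₂) hlt t₂ _ _ le_rfl h1' h2'
      exact ⟨.app t₁ w, mapp .refl j1, mapp .refl j2⟩
    | @appL _ t₁' _ h2' =>
      exact ⟨.app t₁' t₂', .single (.appL h2'), .single (.appR h1')⟩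
  | @sym f l₁ r₁ s₁ s₁' h1' =>
    revert h2
    generalize hX : l₁ ++ s₁ :: r₁ = X
    intro h2
    cases h2 with
    | base hb =>
      subst hX
      exact (peak_base hrules hlcR hb (.sym h1')).symm
    | @sym _ l₂ r₂ s₂ s₂' h2' =>
      rcases append_cons_dichotomy hX with ⟨rfl, rfl, rfl⟩ | ⟨mid, rfl, rfl⟩ | ⟨mid, rfl, rfl⟩
      · have hlt : sizeOf s₁ < N := by
          have := sizeOf_lt_of_mem_tm (f := f) (ts := l₁ ++ s₁ :: r₁)
            (s := s₁) (by simp)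
          omega
        obtain ⟨w, j1, j2⟩ := ih (sizeOf s₁) hlt s₁ _ _ le_rfl h1' h2'
        exact ⟨.sym f (l₁ ++ w :: r₁), msym1 f l₁ r₁ j1, msym1 f l₁ r₁ j2⟩
      · refine ⟨.sym f (l₁ ++ s₁' :: (mid ++ s₂' :: r₂)), ?_, ?_⟩
        · have : Ctx (UB Rules) (.sym f ((l₁ ++ s₁' :: mid) ++ s₂ :: r₂))
              (.sym f ((l₁ ++ s₁' :: mid) ++ s₂' :: r₂)) := .sym h2'
          refine .single ?_
          simpa [List.append_assoc] using this
        · have : Ctx (UB Rules) (.sym f (l₁ ++ s₁ :: (mid ++ s₂' :: r₂)))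
              (.sym f (l₁ ++ s₁' :: (mid ++ s₂' :: r₂))) := .sym h1'
          refine .single ?_
          simpa [List.append_assoc] using this
      · refine ⟨.sym f (l₂ ++ s₂' :: (mid ++ s₁' :: r₁)), ?_, ?_⟩
        · have : Ctx (UB Rules) (.sym f (l₂ ++ s₂ :: (mid ++ s₁' :: r₁)))
              (.sym f (l₂ ++ s₂' :: (mid ++ s₁' :: r₁))) := .sym h2'
          refine .single ?_
          simpa [List.append_assoc] using this
        · have : Ctx (UB Rules) (.sym f ((l₂ ++ s₂' :: mid) ++ s₁ :: r₁))
              (.sym f ((l₂ ++ s₂' :: mid) ++ s₁' :: r₁)) := .sym h1'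
          refine .single ?_
          simpa [List.append_assoc] using this

end Master2

end Tm

open Tm in
/-- If the rewrite relation →_R is generated from rules whose left-hand sides are
non-variable algebraic terms (with FV(r) ⊆ FV(l)), and →_R is locally confluent
on algebraic terms, then →_R ∪ →_β is locally confluent on all terms. -/
theorem local_confluence_R_beta {F : Type} (Rules : Set (Tm F × Tm F))
    (hrules : ∀ p ∈ Rules, Alg p.1 ∧ (∀ n, p.1 ≠ Tm.var n) ∧
      (∀ n, FVar n p.2 → FVar n p.1))
    (hlcR : ∀ t u v : Tm F, Alg t → Ctx (RBase Rules) t u → Ctx (RBase Rules) t v →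
      ∃ w, Relation.ReflTransGen (Ctx (RBase Rules)) u w ∧
           Relation.ReflTransGen (Ctx (RBase Rules)) v w) :
    ∀ t u v : Tm F,
      (Ctx (RBase Rules) t u ∨ Ctx BetaBase t u) →
      (Ctx (RBase Rules) t v ∨ Ctx BetaBase t v) →
      ∃ w, Relation.ReflTransGen (fun a b => Ctx (RBase Rules) a b ∨ Ctx BetaBase a b) u w ∧
           Relation.ReflTransGen (fun a b => Ctx (RBase Rules) a b ∨ Ctx BetaBase a b) v w := by
  intro t u v h1 h2
  have conv : ∀ {x y : Tm F}, (Ctx (RBase Rules) x y ∨ Ctx BetaBase x y) → Ctx (UB Rules) x y :=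
    fun h => h.elim (ctx_mono (fun _ _ => Or.inl)) (ctx_mono (fun _ _ => Or.inr))
  obtain ⟨w, j1, j2⟩ := main hrules hlcR (sizeOf t) t u v le_rfl (conv h1) (conv h2)
  refine ⟨w, ?_, ?_⟩ <;>
    [exact j1.lift id (fun _ _ h => u_elim h); exact j2.lift id (fun _ _ h => u_elim h)]
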